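/- arXiv:1702.04895 — 4 statements merged into one kernel-verified Lean document; each statement's English description precedes it below -/
import Mathlib

section
/- Span equivalence of K-algebras is an equivalence relation: it is reflexive, symmetric, and transitive, where transitivity is witnessed by taking the pullback of the two middle legs of the given spans. -/
open CategoryTheory

universe u

/-- An `n`-globular set: sets of `k`-cells for `0 ≤ k ≤ n` with source and target
maps satisfying the globularity conditions. -/
structure GlobularSet (n : ℕ) where
  cells : Fin (n + 1) → Type u
  src : ∀ k : Fin n, cells k.succ → cells k.castSucc
  tgt : ∀ k : Fin n, cells k.succ → cells k.castSucc
  glob_ss : ∀ (k : ℕ) (h : k + 1 < n) (x : cells ⟨k + 2, by omega⟩),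
    src ⟨k, by omega⟩ (src ⟨k + 1, h⟩ x) = src ⟨k, by omega⟩ (tgt ⟨k + 1, h⟩ x)
  glob_tt : ∀ (k : ℕ) (h : k + 1 < n) (x : cells ⟨k + 2, by omega⟩),
    tgt ⟨k, by omega⟩ (src ⟨k + 1, h⟩ x) = tgt ⟨k, by omega⟩ (tgt ⟨k + 1, h⟩ x)

/-- A map of `n`-globular sets. -/
@[ext]
structure GlobularMap {n : ℕ} (X Y : GlobularSet.{u} n) where
  app : ∀ k, X.cells k → Y.cells k
  comm_src : ∀ (k : Fin n) (x : X.cells k.succ), Y.src k (app _ x) = app _ (X.src k x)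
  comm_tgt : ∀ (k : Fin n) (x : X.cells k.succ), Y.tgt k (app _ x) = app _ (X.tgt k x)

namespace GlobularMap

variable {n : ℕ} {X Y Z S : GlobularSet.{u} n}

/-- Composition of maps of `n`-globular sets. -/
def comp (f : GlobularMap X Y) (g : GlobularMap Y Z) : GlobularMap X Z where
  app k x := g.app k (f.app k x)
  comm_src k x := by rw [g.comm_src, f.comm_src]
  comm_tgt k x := by rw [g.comm_tgt, f.comm_tgt]

/-- `f` is surjective on `0`-cells. -/
def SurjOn0 (f : GlobularMap X Y) : Prop :=
  Function.Surjective (f.app 0)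

/-- `f` is full on `(k+1)`-cells (for `k : Fin n`, this is fullness on cells of
dimension `k+1`): every cell between the images of a pair of parallel `k`-cells lifts. -/
def FullOn (f : GlobularMap X Y) (k : Fin n) : Prop :=
  ∀ (x x' : X.cells k.castSucc) (β : Y.cells k.succ),
    Y.src k β = f.app _ x → Y.tgt k β = f.app _ x' →
      ∃ α : X.cells k.succ, X.src k α = x ∧ X.tgt k α = x' ∧ f.app _ α = β

/-- `f` is faithful on `(k+1)`-cells: `f` is injective on each hom-set. -/
def FaithfulOn (f : GlobularMap X Y) (k : Fin n) : Prop :=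
  ∀ (α α' : X.cells k.succ), X.src k α = X.src k α' → X.tgt k α = X.tgt k α' →
    f.app _ α = f.app _ α' → α = α'

/-- The pointwise pullback of two maps of `n`-globular sets. -/
def Pullback (f : GlobularMap X S) (g : GlobularMap Y S) : GlobularSet.{u} n where
  cells k := { p : X.cells k × Y.cells k // f.app k p.1 = g.app k p.2 }
  src k p := ⟨(X.src k p.1.1, Y.src k p.1.2), by rw [← f.comm_src, ← g.comm_src, p.2]⟩
  tgt k p := ⟨(X.tgt k p.1.1, Y.tgt k p.1.2), by rw [← f.comm_tgt, ← g.comm_tgt, p.2]⟩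
  glob_ss k h x := Subtype.ext (Prod.ext (X.glob_ss k h x.1.1) (Y.glob_ss k h x.1.2))
  glob_tt k h x := Subtype.ext (Prod.ext (X.glob_tt k h x.1.1) (Y.glob_tt k h x.1.2))

/-- First projection from the pullback. -/
def pullbackFst (f : GlobularMap X S) (g : GlobularMap Y S) : GlobularMap (Pullback f g) X where
  app k p := p.1.1
  comm_src _ _ := rfl
  comm_tgt _ _ := rfl

/-- Second projection from the pullback. -/
def pullbackSnd (f : GlobularMap X S) (g : GlobularMap Y S) : GlobularMap (Pullback f g) Y where
  app k p := p.1.2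
  comm_src _ _ := rfl
  comm_tgt _ _ := rfl

end GlobularMap

open GlobularMap in
/-- The category of `n`-globular sets. -/
instance GlobularSet.category (n : ℕ) : Category (GlobularSet.{u} n) where
  Hom X Y := GlobularMap X Y
  id X := ⟨fun _ x => x, fun _ _ => rfl, fun _ _ => rfl⟩
  comp f g := f.comp g
  id_comp f := GlobularMap.ext rfl
  comp_id f := GlobularMap.ext rfl
  assoc f g h := GlobularMap.ext rfl

namespace GlobularMap

variable {n : ℕ} {X Y : GlobularSet.{u} n}

/-- `f` is faithful on the top-dimensional (`n`-)cells.  For `n = 0` this means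
injectivity on the `0`-cells. -/
def FaithfulTop (f : GlobularMap X Y) : Prop :=
  if h : 0 < n then f.FaithfulOn ⟨n - 1, by omega⟩
  else Function.Injective (f.app 0)

/-- `f` is surjective on `0`-cells, full on `m`-cells for all `1 ≤ m ≤ n`, and
faithful on `n`-cells. -/
def IsWeakEquiv (f : GlobularMap X Y) : Prop :=
  f.SurjOn0 ∧ (∀ k : Fin n, f.FullOn k) ∧ f.FaithfulTop

end GlobularMap

section Aux

namespace GlobularMap

variable {n : ℕ} {X Y Z S : GlobularSet.{u} n}

theorem hom_ext' {f g : X ⟶ Y} (h : ∀ k x, f.app k x = g.app k x) : f = g :=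
  GlobularMap.ext (funext fun k => funext (h k))

theorem app_congr {f g : X ⟶ Y} (h : f = g) (k) (x : X.cells k) :
    f.app k x = g.app k x := by rw [h]

theorem comp_app' (f : X ⟶ Y) (g : Y ⟶ Z) (k) (x : X.cells k) :
    (f ≫ g).app k x = g.app k (f.app k x) := rfl

theorem isWeakEquiv_id : (𝟙 X : X ⟶ X).IsWeakEquiv := by
  refine ⟨fun x => ⟨x, rfl⟩, fun k x x' β hs ht => ⟨β, hs, ht, rfl⟩, ?_⟩
  unfold FaithfulTop
  split
  · exact fun α α' _ _ h => h
  · exact fun α α' h => h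

theorem IsWeakEquiv.comp' {f : X ⟶ Y} {g : Y ⟶ Z} (hf : f.IsWeakEquiv)
    (hg : g.IsWeakEquiv) : (f ≫ g).IsWeakEquiv := by
  obtain ⟨hf0, hff, hft⟩ := hf
  obtain ⟨hg0, hgf, hgt⟩ := hg
  refine ⟨hg0.comp hf0, ?_, ?_⟩
  · intro k x x' β hs ht
    obtain ⟨γ, hγs, hγt, hγ⟩ := hgf k (f.app _ x) (f.app _ x') β hs ht
    obtain ⟨α, hαs, hαt, hα⟩ := hff k x x' γ hγs hγt
    exact ⟨α, hαs, hαt, by simpa [comp_app', hα] using hγ⟩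
  · unfold FaithfulTop at *
    split at hft
    · rw [dif_pos (by assumption)] at hgt ⊢
      intro α α' hs ht h
      refine hft α α' hs ht (hgt _ _ ?_ ?_ h)
      · rw [f.comm_src, f.comm_src, hs]
      · rw [f.comm_tgt, f.comm_tgt, ht]
    · rw [dif_neg (by assumption)] at hgt ⊢
      exact fun {α α'} h => hft (hgt h)

theorem pullbackFst_isWeakEquiv {f : GlobularMap X S} {g : GlobularMap Y S}
    (hg : g.IsWeakEquiv) : (pullbackFst f g).IsWeakEquiv := by
  obtain ⟨hg0, hgf, hgt⟩ := hg
  refine ⟨?_, ?_, ?_⟩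
  · intro x
    obtain ⟨y, hy⟩ := hg0 (f.app 0 x)
    exact ⟨⟨(x, y), hy.symm⟩, rfl⟩
  · rintro k ⟨⟨x, y⟩, hxy⟩ ⟨⟨x', y'⟩, hxy'⟩ β hs ht
    have e1 : S.src k (f.app _ β) = g.app _ y := by rw [f.comm_src, hs]; exact hxy
    have e2 : S.tgt k (f.app _ β) = g.app _ y' := by rw [f.comm_tgt, ht]; exact hxy'
    obtain ⟨γ, hγs, hγt, hγ⟩ := hgf k y y' (f.app _ β) e1 e2
    refine ⟨⟨(β, γ), hγ.symm⟩, ?_, ?_, rfl⟩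
    · exact Subtype.ext (Prod.ext hs hγs)
    · exact Subtype.ext (Prod.ext ht hγt)
  · unfold FaithfulTop at hgt ⊢
    split
    · rw [dif_pos (by assumption)] at hgt
      rintro ⟨⟨x, y⟩, hxy⟩ ⟨⟨x', y'⟩, hxy'⟩ hs ht h
      simp only [pullbackFst] at h
      have h1 : x = x' := h
      have h2 : y = y' := by
        refine hgt y y' ?_ ?_ ?_
        · exact congrArg (fun p => p.1.2) hs
        · exact congrArg (fun p => p.1.2) ht
        · rw [← hxy, ← hxy', h1]
      exact Subtype.ext (Prod.ext h1 h2)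
    · rw [dif_neg (by assumption)] at hgt
      rintro ⟨⟨x, y⟩, hxy⟩ ⟨⟨x', y'⟩, hxy'⟩ h
      have h1 : x = x' := h
      refine Subtype.ext (Prod.ext h1 (hgt ?_))
      rw [← hxy, ← hxy', h1]

theorem pullbackSnd_isWeakEquiv {f : GlobularMap X S} {g : GlobularMap Y S}
    (hf : f.IsWeakEquiv) : (pullbackSnd f g).IsWeakEquiv := by
  obtain ⟨hf0, hff, hft⟩ := hf
  refine ⟨?_, ?_, ?_⟩
  · intro y
    obtain ⟨x, hx⟩ := hf0 (g.app 0 y)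
    exact ⟨⟨(x, y), hx⟩, rfl⟩
  · rintro k ⟨⟨x, y⟩, hxy⟩ ⟨⟨x', y'⟩, hxy'⟩ β hs ht
    have e1 : S.src k (g.app _ β) = f.app _ x := by rw [g.comm_src, hs]; exact hxy.symm
    have e2 : S.tgt k (g.app _ β) = f.app _ x' := by rw [g.comm_tgt, ht]; exact hxy'.symm
    obtain ⟨γ, hγs, hγt, hγ⟩ := hff k x x' (g.app _ β) e1 e2
    refine ⟨⟨(γ, β), hγ⟩, ?_, ?_, rfl⟩
    · exact Subtype.ext (Prod.ext hγs hs)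
    · exact Subtype.ext (Prod.ext hγt ht)
  · unfold FaithfulTop at hft ⊢
    split
    · rw [dif_pos (by assumption)] at hft
      rintro ⟨⟨x, y⟩, hxy⟩ ⟨⟨x', y'⟩, hxy'⟩ hs ht h
      have h2 : y = y' := h
      have h1 : x = x' := by
        refine hft x x' ?_ ?_ ?_
        · exact congrArg (fun p => p.1.1) hs
        · exact congrArg (fun p => p.1.1) ht
        · rw [hxy, hxy', h2]
      exact Subtype.ext (Prod.ext h1 h2)
    · rw [dif_neg (by assumption)] at hft
      rintro ⟨⟨x, y⟩, hxy⟩ ⟨⟨x', y'⟩, hxy'⟩ h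
      have h2 : y = y' := h
      refine Subtype.ext (Prod.ext (hft ?_) h2)
      rw [hxy, hxy', h2]

/-- Universal property of the pointwise pullback. -/
def pullbackLift (f : GlobularMap X S) (g : GlobularMap Y S) {A : GlobularSet.{u} n}
    (h1 : GlobularMap A X) (h2 : GlobularMap A Y)
    (hcomm : ∀ k a, f.app k (h1.app k a) = g.app k (h2.app k a)) :
    GlobularMap A (Pullback f g) where
  app k a := ⟨(h1.app k a, h2.app k a), hcomm k a⟩
  comm_src k a := Subtype.ext (Prod.ext (h1.comm_src k a) (h2.comm_src k a))
  comm_tgt k a := Subtype.ext (Prod.ext (h1.comm_tgt k a) (h2.comm_tgt k a))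

end GlobularMap

open GlobularMap in
theorem algPullback_comm {n : ℕ} (K : Monad (GlobularSet.{u} n)) {Z W Y : K.Algebra}
    (v : Z ⟶ Y) (s : W ⟶ Y) :
    K.map (pullbackFst v.f s.f) ≫ Z.a ≫ v.f = K.map (pullbackSnd v.f s.f) ≫ W.a ≫ s.f := by
  have hpq : (pullbackFst v.f s.f ≫ v.f : Pullback v.f s.f ⟶ Y.A) =
      pullbackSnd v.f s.f ≫ s.f := hom_ext' fun k x => x.2
  rw [← v.h, ← s.h, ← Category.assoc, ← Category.assoc, ← K.map_comp, ← K.map_comp, hpq]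

open GlobularMap in
/-- The structure map of the pullback of algebras. -/
def algPullbackStr {n : ℕ} (K : Monad (GlobularSet.{u} n)) {Z W Y : K.Algebra}
    (v : Z ⟶ Y) (s : W ⟶ Y) :
    K.obj (Pullback v.f s.f) ⟶ Pullback v.f s.f :=
  pullbackLift v.f s.f (K.map (pullbackFst v.f s.f) ≫ Z.a) (K.map (pullbackSnd v.f s.f) ≫ W.a)
    (fun k x => app_congr
      (by simpa only [Category.assoc] using algPullback_comm K v s) k x)

open GlobularMap in
theorem algPullbackStr_fst {n : ℕ} (K : Monad (GlobularSet.{u} n)) {Z W Y : K.Algebra}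
    (v : Z ⟶ Y) (s : W ⟶ Y) :
    algPullbackStr K v s ≫ pullbackFst v.f s.f = K.map (pullbackFst v.f s.f) ≫ Z.a := rfl

open GlobularMap in
theorem algPullbackStr_snd {n : ℕ} (K : Monad (GlobularSet.{u} n)) {Z W Y : K.Algebra}
    (v : Z ⟶ Y) (s : W ⟶ Y) :
    algPullbackStr K v s ≫ pullbackSnd v.f s.f = K.map (pullbackSnd v.f s.f) ≫ W.a := rfl

open GlobularMap in
/-- The pullback of two algebra maps into a common algebra, as an algebra. -/
def algPullback {n : ℕ} (K : Monad (GlobularSet.{u} n)) {Z W Y : K.Algebra}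
    (v : Z ⟶ Y) (s : W ⟶ Y) : K.Algebra := by
  set P := Pullback v.f s.f with hP
  set p : P ⟶ Z.A := pullbackFst v.f s.f with hp
  set q : P ⟶ W.A := pullbackSnd v.f s.f with hq
  set a : K.obj P ⟶ P := algPullbackStr K v s with ha
  have hap : a ≫ p = K.map p ≫ Z.a := rfl
  have haq : a ≫ q = K.map q ≫ W.a := rfl
  refine { A := P, a := a, unit := ?_, assoc := ?_ }
  · have key1 : K.η.app P ≫ a ≫ p = p := by
      rw [hap, ← Category.assoc, ← K.η.naturality p, Category.assoc, Z.unit]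
      simp
    have key2 : K.η.app P ≫ a ≫ q = q := by
      rw [haq, ← Category.assoc, ← K.η.naturality q, Category.assoc, W.unit]
      simp
    apply hom_ext'
    intro k x
    exact Subtype.ext (Prod.ext (app_congr key1 k x) (app_congr key2 k x))
  · have key1 : K.μ.app P ≫ a ≫ p = K.map a ≫ a ≫ p := by
      calc K.μ.app P ≫ a ≫ p
          = K.μ.app P ≫ K.map p ≫ Z.a := by rw [hap]
        _ = (K.μ.app P ≫ K.map p) ≫ Z.a := by rw [Category.assoc]
        _ = ((K.toFunctor ⋙ K.toFunctor).map p ≫ K.μ.app Z.A) ≫ Z.a := by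
              rw [K.μ.naturality p]
        _ = K.map (K.map p) ≫ K.μ.app Z.A ≫ Z.a := by rw [Category.assoc]; rfl
        _ = K.map (K.map p) ≫ K.map Z.a ≫ Z.a := by rw [Z.assoc]
        _ = (K.map (K.map p) ≫ K.map Z.a) ≫ Z.a := by rw [Category.assoc]
        _ = K.map (K.map p ≫ Z.a) ≫ Z.a := by rw [K.map_comp]
        _ = K.map (a ≫ p) ≫ Z.a := by rw [hap]
        _ = (K.map a ≫ K.map p) ≫ Z.a := by rw [K.map_comp]
        _ = K.map a ≫ K.map p ≫ Z.a := by rw [Category.assoc]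
        _ = K.map a ≫ a ≫ p := by rw [hap]
    have key2 : K.μ.app P ≫ a ≫ q = K.map a ≫ a ≫ q := by
      calc K.μ.app P ≫ a ≫ q
          = K.μ.app P ≫ K.map q ≫ W.a := by rw [haq]
        _ = (K.μ.app P ≫ K.map q) ≫ W.a := by rw [Category.assoc]
        _ = ((K.toFunctor ⋙ K.toFunctor).map q ≫ K.μ.app W.A) ≫ W.a := by
              rw [K.μ.naturality q]
        _ = K.map (K.map q) ≫ K.μ.app W.A ≫ W.a := by rw [Category.assoc]; rfl
        _ = K.map (K.map q) ≫ K.map W.a ≫ W.a := by rw [W.assoc]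
        _ = (K.map (K.map q) ≫ K.map W.a) ≫ W.a := by rw [Category.assoc]
        _ = K.map (K.map q ≫ W.a) ≫ W.a := by rw [K.map_comp]
        _ = K.map (a ≫ q) ≫ W.a := by rw [haq]
        _ = (K.map a ≫ K.map q) ≫ W.a := by rw [K.map_comp]
        _ = K.map a ≫ K.map q ≫ W.a := by rw [Category.assoc]
        _ = K.map a ≫ a ≫ q := by rw [haq]
    apply hom_ext'
    intro k x
    exact Subtype.ext (Prod.ext (app_congr key1 k x) (app_congr key2 k x))

open GlobularMap in
/-- The first projection of the algebra pullback, as an algebra map. -/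
def algPullbackFst {n : ℕ} (K : Monad (GlobularSet.{u} n)) {Z W Y : K.Algebra}
    (v : Z ⟶ Y) (s : W ⟶ Y) : algPullback K v s ⟶ Z where
  f := pullbackFst v.f s.f
  h := hom_ext' fun k x => rfl

open GlobularMap in
/-- The second projection of the algebra pullback, as an algebra map. -/
def algPullbackSnd {n : ℕ} (K : Monad (GlobularSet.{u} n)) {Z W Y : K.Algebra}
    (v : Z ⟶ Y) (s : W ⟶ Y) : algPullback K v s ⟶ W where
  f := pullbackSnd v.f s.f
  h := hom_ext' fun k x => rfl

end Aux

/-- Two algebras for a monad `K` on `n`-globular sets (such as the monad induced by an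
`n`-globular operad) are span equivalent if there is a span of `K`-algebra maps whose
legs are surjective on `0`-cells, full on `m`-cells for `1 ≤ m ≤ n`, and faithful on
`n`-cells. -/
def SpanEquiv {n : ℕ} (K : Monad (GlobularSet.{u} n)) (X Y : K.Algebra) : Prop :=
  ∃ (Z : K.Algebra) (u : Z ⟶ X) (v : Z ⟶ Y), u.f.IsWeakEquiv ∧ v.f.IsWeakEquiv

/-- span equivalence of `K`-algebras is an equivalence relation. -/
theorem spanEquiv_equivalence {n : ℕ} (K : Monad (GlobularSet.{u} n)) :
    Equivalence (SpanEquiv K) := by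
  constructor
  · intro X
    exact ⟨X, 𝟙 X, 𝟙 X, GlobularMap.isWeakEquiv_id, GlobularMap.isWeakEquiv_id⟩
  · rintro X Y ⟨Z, u, v, hu, hv⟩
    exact ⟨Z, v, u, hv, hu⟩
  · rintro X Y W ⟨Z, u, v, hu, hv⟩ ⟨Z', u', v', hu', hv'⟩
    refine ⟨algPullback K v u', algPullbackFst K v u' ≫ u, algPullbackSnd K v u' ≫ v', ?_, ?_⟩
    · exact GlobularMap.IsWeakEquiv.comp' (GlobularMap.pullbackFst_isWeakEquiv hu') hu
    · exact GlobularMap.IsWeakEquiv.comp' (GlobularMap.pullbackSnd_isWeakEquiv hv) hv'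
end

section
/- Given an adjoint equivalence ⟨S : A → B, T : B → A, η : 1_A ≅ TS, ε : ST ≅ 1_B⟩ between categories A and B, the equivalence fusion A ⊔| B — with objects Ob(A) ⊔ Ob(B), hom-sets Hom(x,y) given by A(x,y) if x,y ∈ A, B(x,y) if x,y ∈ B, B(Sx,y) if x ∈ A, y ∈ B, B(x,Sy) if x ∈ B, y ∈ A, and composition defined by applying S and the conjugation g∘f = η_z^{-1} ∘ Tg ∘ Tf ∘ η_x in the mixed cases — is a category (composition is associative and unital). -/
open CategoryTheory

universe v u u'

variable {A : Type u} {B : Type u'} [Category.{v} A] [Category.{v} B]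

/-- Hom-sets of the equivalence fusion `A ⊔| B` of an adjoint equivalence
`e = ⟨S, T, η, ε⟩` between `A` and `B`.  Objects are `A ⊕ B`; in the mixed
cases the hom-sets are `B(Sx, y)` and `B(x, Sy)`. -/
def FusionHom (e : A ≌ B) : A ⊕ B → A ⊕ B → Type v
  | .inl x, .inl y => x ⟶ y
  | .inr x, .inr y => x ⟶ y
  | .inl x, .inr y => e.functor.obj x ⟶ y
  | .inr x, .inl y => x ⟶ e.functor.obj y

/-- Identities of the equivalence fusion. -/
def fusionId (e : A ≌ B) : ∀ x : A ⊕ B, FusionHom e x x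
  | .inl x => 𝟙 x
  | .inr x => 𝟙 x

/-- Composition of the equivalence fusion, written in diagrammatic order:
`fusionComp e x y z f g` is the composite `g ∘ f` of the paper.  In the mixed case
`x ∈ A, y ∈ B, z ∈ A` it is the conjugation `η_z⁻¹ ∘ Tg ∘ Tf ∘ η_x`. -/
def fusionComp (e : A ≌ B) :
    ∀ (x y z : A ⊕ B), FusionHom e x y → FusionHom e y z → FusionHom e x z
  | .inl _, .inl _, .inl _, f, g => f ≫ g
  | .inl _, .inl _, .inr _, f, g => e.functor.map f ≫ g
  | .inl x, .inr _, .inl z, f, g =>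
      e.unitIso.hom.app x ≫ e.inverse.map f ≫ e.inverse.map g ≫ e.unitIso.inv.app z
  | .inl _, .inr _, .inr _, f, g => f ≫ g
  | .inr _, .inl _, .inl _, f, g => f ≫ e.functor.map g
  | .inr _, .inl _, .inr _, f, g => f ≫ g
  | .inr _, .inr _, .inl _, f, g => f ≫ g
  | .inr _, .inr _, .inr _, f, g => f ≫ g

/-- the equivalence fusion `A ⊔| B` of an adjoint equivalence is a
category: its composition is unital and associative. -/
theorem fusion_is_category (e : A ≌ B) :
    (∀ (x y : A ⊕ B) (f : FusionHom e x y), fusionComp e x x y (fusionId e x) f = f) ∧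
    (∀ (x y : A ⊕ B) (f : FusionHom e x y), fusionComp e x y y f (fusionId e y) = f) ∧
    (∀ (w x y z : A ⊕ B) (f : FusionHom e w x) (g : FusionHom e x y) (h : FusionHom e y z),
      fusionComp e w y z (fusionComp e w x y f g) h =
        fusionComp e w x z f (fusionComp e x y z g h)) := by
  refine ⟨fun x y f => ?_, fun x y f => ?_, fun w x y z f g h => ?_⟩
  · rcases x with x|x <;> rcases y with y|y <;> dsimp only [FusionHom] at f ⊢ <;>
      simp [fusionComp, fusionId]
  · rcases x with x|x <;> rcases y with y|y <;> dsimp only [FusionHom] at f ⊢ <;>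
      simp [fusionComp, fusionId]
  · rcases w with w|w <;> rcases x with x|x <;> rcases y with y|y <;> rcases z with z|z <;>
      dsimp only [FusionHom] at f g h ⊢ <;>
      simp only [fusionComp, Functor.map_comp, Category.assoc, Equivalence.fun_inv_map,
        Iso.hom_inv_id_app, Iso.hom_inv_id_app_assoc, Category.comp_id, Category.id_comp,
        Equivalence.functor_unit_comp_assoc, Iso.inv_hom_id_app, Iso.inv_hom_id_app_assoc] <;>
      simp [← Functor.comp_map, ← NatTrans.naturality_assoc, NatTrans.naturality]
end

section
/- The projection u : A ⊔| B → A from the equivalence fusion, sending an object x to x if x ∈ A and to Tx if x ∈ B, and a morphism f to f (x,y ∈ A), Tf (x,y ∈ B), Tf ∘ η_x (x ∈ A, y ∈ B), η_y^{-1} ∘ Tf (x ∈ B, y ∈ A), is a functor. -/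
open CategoryTheory

universe v u u'

variable {A : Type u} {B : Type u'} [Category.{v} A] [Category.{v} B]

/-- The object part of the projection `u : A ⊔| B → A`. -/
def fusionProjUObj (e : A ≌ B) : A ⊕ B → A
  | .inl x => x
  | .inr x => e.inverse.obj x

/-- The morphism part of the projection `u : A ⊔| B → A`:
`f ↦ f`, `Tf`, `Tf ∘ η_x`, or `η_y⁻¹ ∘ Tf` in the four cases. -/
def fusionProjUMap (e : A ≌ B) :
    ∀ (x y : A ⊕ B), FusionHom e x y → (fusionProjUObj e x ⟶ fusionProjUObj e y)
  | .inl _, .inl _, f => f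
  | .inr _, .inr _, f => e.inverse.map f
  | .inl x, .inr _, f => e.unitIso.hom.app x ≫ e.inverse.map f
  | .inr _, .inl y, f => e.inverse.map f ≫ e.unitIso.inv.app y

/-- The object part of the projection `v : A ⊔| B → B`. -/
def fusionProjVObj (e : A ≌ B) : A ⊕ B → B
  | .inl x => e.functor.obj x
  | .inr x => x

/-- The morphism part of the projection `v : A ⊔| B → B`:
`Sf` if both endpoints lie in `A`, and `f` otherwise. -/
def fusionProjVMap (e : A ≌ B) :
    ∀ (x y : A ⊕ B), FusionHom e x y → (fusionProjVObj e x ⟶ fusionProjVObj e y)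
  | .inl _, .inl _, f => e.functor.map f
  | .inl _, .inr _, f => f
  | .inr _, .inl _, f => f
  | .inr _, .inr _, f => f

/-- the projection `u : A ⊔| B → A` is a functor: it preserves
identities and composition. -/
theorem fusionProjU_functor (e : A ≌ B) :
    (∀ x : A ⊕ B, fusionProjUMap e x x (fusionId e x) = 𝟙 (fusionProjUObj e x)) ∧
    (∀ (x y z : A ⊕ B) (f : FusionHom e x y) (g : FusionHom e y z),
      fusionProjUMap e x z (fusionComp e x y z f g) =
        fusionProjUMap e x y f ≫ fusionProjUMap e y z g) := by
  constructor
  · rintro (x|x) <;> simp [fusionProjUMap, fusionId, fusionProjUObj]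
  · rintro (x|x) (y|y) (z|z) f g <;> dsimp only [FusionHom] at f g <;>
      simp [fusionProjUMap, fusionComp, fusionProjUObj]
end

section
/- The projection v : A ⊔| B → B from the equivalence fusion, sending an object x to Sx if x ∈ A and to x if x ∈ B, and a morphism f to Sf if both endpoints lie in A and to f otherwise, is a functor. -/
open CategoryTheory

universe v u u'

variable {A : Type u} {B : Type u'} [Category.{v} A] [Category.{v} B]

/-- the projection `v : A ⊔| B → B` is a functor: it preserves
identities and composition. -/
theorem fusionProjV_functor (e : A ≌ B) :
    (∀ x : A ⊕ B, fusionProjVMap e x x (fusionId e x) = 𝟙 (fusionProjVObj e x)) ∧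
    (∀ (x y z : A ⊕ B) (f : FusionHom e x y) (g : FusionHom e y z),
      fusionProjVMap e x z (fusionComp e x y z f g) =
        fusionProjVMap e x y f ≫ fusionProjVMap e y z g) := by
  constructor
  · rintro (x|x) <;> simp [fusionProjVMap, fusionId, fusionProjVObj]
  · rintro (x|x) (y|y) (z|z) f g <;>
      simp [fusionProjVMap, fusionComp, fusionProjVObj, e.fun_inv_map]
    · exact e.functor.map_comp (X := x) (Y := y) (Z := z) f g
    · change e.functor.obj x ⟶ y at f
      change y ⟶ e.functor.obj z at g
      simp [e.fun_inv_map]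
end
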